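/- Let J be a tree, let M be a J-strip system in a graph G, and let ab be a cross-edge for M with partition (α,β). If X ⊆ V(M)∪{a,b} is not local and {a,b} is not a subset of X, then there exist x,y ∈ X such that {x,y} is not local. -/
import Mathlib


open SimpleGraph

namespace EHF

variable {V : Type*} {W : Type*} {U : Type*}

/-- The closed neighbourhood `N[a]` of a vertex `a`. -/
def closedNbhd (G : SimpleGraph V) (a : V) : Set V := insert a (G.neighborSet a)

/-- A hole: an induced cycle of length at least four. -/
def IsHole (G : SimpleGraph V) {v : V} (c : G.Walk v v) : Prop :=
  c.IsCycle ∧ 4 ≤ c.length ∧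
    ∀ x y : V, x ∈ c.support → y ∈ c.support → G.Adj x y → s(x, y) ∈ c.edges

/-- A graph is even-hole-free if it has no hole with an even number of vertices. -/
def EvenHoleFree (G : SimpleGraph V) : Prop :=
  ∀ (v : V) (c : G.Walk v v), IsHole G c → ¬ Even c.length

/-- A vertex is bisimplicial if its neighbourhood is the union of two cliques. -/
def Bisimplicial (G : SimpleGraph V) (v : V) : Prop :=
  ∃ K₁ K₂ : Set V, G.IsClique K₁ ∧ G.IsClique K₂ ∧ G.neighborSet v = K₁ ∪ K₂

/-- `F` induces a connected subgraph of `G`. -/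
def ConnectedSubset (G : SimpleGraph V) (F : Set V) : Prop :=
  F.Nonempty ∧ ∀ x ∈ F, ∀ y ∈ F, ∃ p : G.Walk x y, ∀ z ∈ p.support, z ∈ F

/-- `F` is the vertex set of a connected component of `G` minus the vertex set `S`. -/
def IsComponentOf (G : SimpleGraph V) (S F : Set V) : Prop :=
  ConnectedSubset G F ∧ Disjoint F S ∧
    ∀ x ∈ F, ∀ y : V, y ∉ S → G.Adj x y → y ∈ F

/-- The set of vertices of `S` having a neighbour in `F`. -/
def Att (G : SimpleGraph V) (S F : Set V) : Set V :=
  {v ∈ S | ∃ x ∈ F, G.Adj v x}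

/-- A cutset: the rest of the graph is the union of two nonempty sets that are
anticomplete to each other. -/
def IsCutset (G : SimpleGraph V) (C : Set V) : Prop :=
  ∃ X Y : Set V, X.Nonempty ∧ Y.Nonempty ∧ Disjoint X Y ∧ X ∪ Y = Cᶜ ∧
    ∀ x ∈ X, ∀ y ∈ Y, ¬ G.Adj x y

/-- `G` has a full star cutset with centre `v`. -/
def FullStarCutset (G : SimpleGraph V) (v : V) : Prop :=
  IsCutset G (closedNbhd G v)

/-- A walk is induced if every edge of `G` between vertices of the walk is an
edge of the walk. -/
def InducedWalk (G : SimpleGraph V) {x y : V} (P : G.Walk x y) : Prop :=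
  ∀ u v : V, u ∈ P.support → v ∈ P.support → G.Adj u v → s(u, v) ∈ P.edges

/-- A theta with ends `u,w` and constituent paths `P₁,P₂,P₃`, as an induced
subgraph of `G`. -/
def IsThetaIn (G : SimpleGraph V) (u w : V) (P₁ P₂ P₃ : G.Walk u w) : Prop :=
  u ≠ w ∧ P₁.IsPath ∧ P₂.IsPath ∧ P₃.IsPath ∧
  2 ≤ P₁.length ∧ 2 ≤ P₂.length ∧ 2 ≤ P₃.length ∧
  (∀ v : V, v ∈ P₁.support → v ∈ P₂.support → v = u ∨ v = w) ∧
  (∀ v : V, v ∈ P₁.support → v ∈ P₃.support → v = u ∨ v = w) ∧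
  (∀ v : V, v ∈ P₂.support → v ∈ P₃.support → v = u ∨ v = w) ∧
  (∀ x y : V, (x ∈ P₁.support ∨ x ∈ P₂.support ∨ x ∈ P₃.support) →
    (y ∈ P₁.support ∨ y ∈ P₂.support ∨ y ∈ P₃.support) → G.Adj x y →
    s(x, y) ∈ P₁.edges ∨ s(x, y) ∈ P₂.edges ∨ s(x, y) ∈ P₃.edges)

/-- A near-prism with bases `{a₁,a₂,a₃}`, `{b₁,b₂,b₃}` and constituent paths
`R₁,R₂,R₃`, as an induced subgraph of `G`. -/
def IsNearPrismIn (G : SimpleGraph V) (a₁ a₂ a₃ b₁ b₂ b₃ : V)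
    (R₁ : G.Walk a₁ b₁) (R₂ : G.Walk a₂ b₂) (R₃ : G.Walk a₃ b₃) : Prop :=
  G.Adj a₁ a₂ ∧ G.Adj a₁ a₃ ∧ G.Adj a₂ a₃ ∧
  G.Adj b₁ b₂ ∧ G.Adj b₁ b₃ ∧ G.Adj b₂ b₃ ∧
  (({a₁, a₂, a₃} : Set V) ∩ ({b₁, b₂, b₃} : Set V) = ({a₃} : Set V) ∩ ({b₃} : Set V)) ∧
  R₁.IsPath ∧ R₂.IsPath ∧ R₃.IsPath ∧
  (∀ v : V, v ∈ R₁.support → v ∉ R₂.support) ∧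
  (∀ v : V, v ∈ R₁.support → v ∉ R₃.support) ∧
  (∀ v : V, v ∈ R₂.support → v ∉ R₃.support) ∧
  (∀ p q : V, (p ∈ R₁.support ∨ p ∈ R₂.support ∨ p ∈ R₃.support) →
    (q ∈ R₁.support ∨ q ∈ R₂.support ∨ q ∈ R₃.support) → G.Adj p q →
    s(p, q) ∈ R₁.edges ∨ s(p, q) ∈ R₂.edges ∨ s(p, q) ∈ R₃.edges ∨
    s(p, q) = s(a₁, a₂) ∨ s(p, q) = s(a₁, a₃) ∨ s(p, q) = s(a₂, a₃) ∨
    s(p, q) = s(b₁, b₂) ∨ s(p, q) = s(b₁, b₃) ∨ s(p, q) = s(b₂, b₃))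

/-- An extended near-prism contained in `G`, with cross-edge `xy` where
`x` lies in the interior of `R₁` and `y` in the interior of `R₂`. -/
def IsExtNearPrismIn (G : SimpleGraph V) (a₁ a₂ a₃ b₁ b₂ b₃ : V)
    (R₁ : G.Walk a₁ b₁) (R₂ : G.Walk a₂ b₂) (R₃ : G.Walk a₃ b₃) (x y : V) : Prop :=
  G.Adj a₁ a₂ ∧ G.Adj a₁ a₃ ∧ G.Adj a₂ a₃ ∧
  G.Adj b₁ b₂ ∧ G.Adj b₁ b₃ ∧ G.Adj b₂ b₃ ∧
  (({a₁, a₂, a₃} : Set V) ∩ ({b₁, b₂, b₃} : Set V) = ({a₃} : Set V) ∩ ({b₃} : Set V)) ∧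
  R₁.IsPath ∧ R₂.IsPath ∧ R₃.IsPath ∧
  (∀ v : V, v ∈ R₁.support → v ∉ R₂.support) ∧
  (∀ v : V, v ∈ R₁.support → v ∉ R₃.support) ∧
  (∀ v : V, v ∈ R₂.support → v ∉ R₃.support) ∧
  x ∈ R₁.support ∧ x ≠ a₁ ∧ x ≠ b₁ ∧
  y ∈ R₂.support ∧ y ≠ a₂ ∧ y ≠ b₂ ∧
  G.Adj x y ∧
  (∀ p q : V, (p ∈ R₁.support ∨ p ∈ R₂.support ∨ p ∈ R₃.support) →
    (q ∈ R₁.support ∨ q ∈ R₂.support ∨ q ∈ R₃.support) → G.Adj p q →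
    s(p, q) ∈ R₁.edges ∨ s(p, q) ∈ R₂.edges ∨ s(p, q) ∈ R₃.edges ∨
    s(p, q) = s(a₁, a₂) ∨ s(p, q) = s(a₁, a₃) ∨ s(p, q) = s(a₂, a₃) ∨
    s(p, q) = s(b₁, b₂) ∨ s(p, q) = s(b₁, b₃) ∨ s(p, q) = s(b₂, b₃) ∨
    s(p, q) = s(x, y))

/-- There is an extended near-prism contained in `G` such that `a` is an end of
its cross-edge. -/
def ExtNearPrismCrossEnd (G : SimpleGraph V) (a : V) : Prop :=
  ∃ (a₁ a₂ a₃ b₁ b₂ b₃ : V) (R₁ : G.Walk a₁ b₁) (R₂ : G.Walk a₂ b₂)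
    (R₃ : G.Walk a₃ b₃) (y : V),
    IsExtNearPrismIn G a₁ a₂ a₃ b₁ b₂ b₃ R₁ R₂ R₃ a y ∨
    IsExtNearPrismIn G a₁ a₂ a₃ b₁ b₂ b₃ R₁ R₂ R₃ y a

/-- `G` contains an even wheel (as an induced subgraph). -/
def HasEvenWheel (G : SimpleGraph V) : Prop :=
  ∃ (u : V) (c : G.Walk u u) (v : V), IsHole G c ∧ v ∉ c.support ∧
    3 ≤ {x : V | x ∈ c.support ∧ G.Adj v x}.ncard ∧
    ({x : V | x ∈ c.support ∧ G.Adj v x}.ncard = 3 →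
      ∀ x y : V, x ∈ c.support → y ∈ c.support → G.Adj v x → G.Adj v y → ¬ G.Adj x y) ∧
    Even {x : V | x ∈ c.support ∧ G.Adj v x}.ncard

/-- A pyramid with apex `a`, base `{b₁,b₂,b₃}` and constituent paths
`R₁,R₂,R₃`, as an induced subgraph of `G`. -/
def IsPyramidIn (G : SimpleGraph V) (a b₁ b₂ b₃ : V)
    (R₁ : G.Walk a b₁) (R₂ : G.Walk a b₂) (R₃ : G.Walk a b₃) : Prop :=
  G.Adj b₁ b₂ ∧ G.Adj b₁ b₃ ∧ G.Adj b₂ b₃ ∧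
  a ≠ b₁ ∧ a ≠ b₂ ∧ a ≠ b₃ ∧
  R₁.IsPath ∧ R₂.IsPath ∧ R₃.IsPath ∧
  (∀ v : V, v ∈ R₁.support → v ∈ R₂.support → v = a) ∧
  (∀ v : V, v ∈ R₁.support → v ∈ R₃.support → v = a) ∧
  (∀ v : V, v ∈ R₂.support → v ∈ R₃.support → v = a) ∧
  ((2 ≤ R₁.length ∧ 2 ≤ R₂.length) ∨ (2 ≤ R₁.length ∧ 2 ≤ R₃.length) ∨
    (2 ≤ R₂.length ∧ 2 ≤ R₃.length)) ∧
  (∀ p q : V, (p ∈ R₁.support ∨ p ∈ R₂.support ∨ p ∈ R₃.support) →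
    (q ∈ R₁.support ∨ q ∈ R₂.support ∨ q ∈ R₃.support) → G.Adj p q →
    s(p, q) ∈ R₁.edges ∨ s(p, q) ∈ R₂.edges ∨ s(p, q) ∈ R₃.edges ∨
    s(p, q) = s(b₁, b₂) ∨ s(p, q) = s(b₁, b₃) ∨ s(p, q) = s(b₂, b₃))

/-- A vertex `a` is splendid: `V(G)\N[a]` is connected, every neighbour of `a`
has a neighbour in `V(G)\N[a]`, and there is no short pyramid with apex `a`. -/
def Splendid (G : SimpleGraph V) (a : V) : Prop :=
  ConnectedSubset G ((closedNbhd G a)ᶜ) ∧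
  (∀ v : V, G.Adj a v → ∃ w : V, w ∉ closedNbhd G a ∧ G.Adj v w) ∧
  ¬ ∃ (b₁ b₂ b₃ : V) (R₁ : G.Walk a b₁) (R₂ : G.Walk a b₂) (R₃ : G.Walk a b₃),
      IsPyramidIn G a b₁ b₂ b₃ R₁ R₂ R₃ ∧
      (R₁.length = 1 ∨ R₂.length = 1 ∨ R₃.length = 1)

/-- A rung of the strip `(A,B,C)`. -/
def IsRung (G : SimpleGraph V) (A B C : Set V) {x y : V} (P : G.Walk x y) : Prop :=
  P.IsPath ∧ x ∈ A ∧ y ∈ B ∧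
  (∀ v ∈ P.support, v ≠ x → v ≠ y → v ∈ C) ∧
  (x ≠ y → x ∉ B ∧ y ∉ A) ∧
  InducedWalk G P

/-- A strip `(A,B,C)`: `A,B` nonempty and disjoint from `C`, and every vertex of
`A∪B∪C` lies on a rung. -/
def IsStrip (G : SimpleGraph V) (A B C : Set V) : Prop :=
  A.Nonempty ∧ B.Nonempty ∧ Disjoint A C ∧ Disjoint B C ∧
  ∀ v ∈ A ∪ B ∪ C, ∃ (x y : V) (P : G.Walk x y), IsRung G A B C P ∧ v ∈ P.support

/-- A `J`-strip system in `G`. -/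
structure StripSystem (G : SimpleGraph V) (J : SimpleGraph W) where
  ME : W → W → Set V
  MV : W → Set V
  me_symm : ∀ u v : W, ME u v = ME v u
  me_disj : ∀ u v w x : W, J.Adj u v → J.Adj w x → s(u, v) ≠ s(w, x) →
    Disjoint (ME u v) (ME w x)
  mv_sub : ∀ u : W, MV u ⊆ ⋃ (v : W), ⋃ (_ : J.Adj u v), ME u v
  strip : ∀ u v : W, J.Adj u v →
    IsStrip G (ME u v ∩ MV u) (ME u v ∩ MV v) (ME u v \ (MV u ∪ MV v))
  far : ∀ u v w x : W, J.Adj u v → J.Adj w x → u ≠ w → u ≠ x → v ≠ w → v ≠ x →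
    ∀ p ∈ ME u v, ∀ q ∈ ME w x, ¬ G.Adj p q
  near : ∀ u v w : W, J.Adj u v → J.Adj u w → v ≠ w →
    ∀ p ∈ ME u v, ∀ q ∈ ME u w, (G.Adj p q ↔ p ∈ MV u ∧ q ∈ MV u)

/-- `V(M)`: the union of the sets `M_e` over the edges of `J`. -/
def VM {G : SimpleGraph V} {J : SimpleGraph W} (S : StripSystem G J) : Set V :=
  ⋃ (u : W), ⋃ (v : W), ⋃ (_ : J.Adj u v), S.ME u v

/-- A leaf of a graph: a vertex of degree exactly one. -/
def IsLeaf (J : SimpleGraph W) (u : W) : Prop := (J.neighborSet u).ncard = 1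

/-- `ab` is a cross-edge for the strip system `S` with partition `(α,β)` of the
leaves of `J`. -/
def IsCrossEdge {G : SimpleGraph V} {J : SimpleGraph W} (S : StripSystem G J)
    (a b : V) (α β : Set W) : Prop :=
  G.Adj a b ∧
  α ∪ β = {u : W | IsLeaf J u} ∧ Disjoint α β ∧
  (∀ u : W, (J.neighborSet u).ncard ≠ 2) ∧
  3 ≤ Nat.card W ∧
  (∀ u u₁ u₂ : W, u₁ ∈ α → u₂ ∈ α → J.Adj u u₁ → J.Adj u u₂ → u₁ = u₂) ∧
  (∀ u u₁ u₂ : W, u₁ ∈ β → u₂ ∈ β → J.Adj u u₁ → J.Adj u u₂ → u₁ = u₂) ∧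
  (∀ u v : W, J.Adj u v → a ∉ S.ME u v ∧ b ∉ S.ME u v) ∧
  (∀ x ∈ VM S, (G.Adj a x ↔ ∃ u ∈ α, x ∈ S.MV u)) ∧
  (∀ x ∈ VM S, (G.Adj b x ↔ ∃ u ∈ β, x ∈ S.MV u))

/-- A local subset of `V(M)∪{a,b}`. -/
def IsLocal {G : SimpleGraph V} {J : SimpleGraph W} (S : StripSystem G J)
    (a b : V) (α β : Set W) (X : Set V) : Prop :=
  (∃ u v : W, J.Adj u v ∧ X ⊆ S.ME u v) ∨
  (∃ u : W, X ⊆ S.MV u) ∨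
  (a ∈ X ∧ b ∉ X ∧ ∃ u ∈ α, X \ {a} ⊆ S.MV u) ∨
  (b ∈ X ∧ a ∉ X ∧ ∃ u ∈ β, X \ {b} ⊆ S.MV u)

/-- A branch-vertex of a tree: a vertex of degree different from two. -/
def BranchVertex (T : SimpleGraph U) (u : U) : Prop := (T.neighborSet u).ncard ≠ 2

/-- `u` and `v` are distinct branch-vertices joined by a branch of `T`. -/
def JoinedByBranch (T : SimpleGraph U) (u v : U) : Prop :=
  u ≠ v ∧ BranchVertex T u ∧ BranchVertex T v ∧
    ∃ p : T.Walk u v, p.IsPath ∧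
      ∀ w ∈ p.support, w ≠ u → w ≠ v → (T.neighborSet w).ncard = 2

/-- The shape of a tree `T`: the graph on its branch-vertices, two being
adjacent when joined by a branch. -/
def Shape (T : SimpleGraph U) : SimpleGraph {u : U // BranchVertex T u} :=
  SimpleGraph.fromRel (fun u v => JoinedByBranch T u.1 v.1)

/-- `y` is reachable from `x` in `T` by a walk avoiding `v`. -/
def ReachAvoiding (T : SimpleGraph U) (v x y : U) : Prop :=
  ∃ p : T.Walk x y, v ∉ p.support

/-- The component of `x` in `T` minus `v` contains no vertex of `A`. -/
def MissesSet (T : SimpleGraph U) (v : U) (A : Set U) (x : U) : Prop :=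
  ∀ z : U, ReachAvoiding T v x z → z ∉ A

/-- `G` contains an induced extended tree line-graph `H(T)` with cross-edge
`ab`, via the injection `φ` of the edges of `T` into `V(G)`, where `(A',B')`
is the bipartition of the tree `T`. -/
def ExtTreeLineGraphIn (G : SimpleGraph V) (T : SimpleGraph U)
    (A' B' : Set U) (a b : V) (φ : Sym2 U → V) : Prop :=
  T.IsTree ∧
  A' ∪ B' = Set.univ ∧ Disjoint A' B' ∧
  (∀ u v : U, T.Adj u v → (u ∈ A' ↔ v ∈ B')) ∧
  3 ≤ {u : U | IsLeaf T u}.ncard ∧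
  (∀ v x y : U, x ≠ v → y ≠ v → MissesSet T v A' x → MissesSet T v A' y →
    ReachAvoiding T v x y) ∧
  (∀ v x y : U, x ≠ v → y ≠ v → MissesSet T v B' x → MissesSet T v B' y →
    ReachAvoiding T v x y) ∧
  G.Adj a b ∧
  Set.InjOn φ T.edgeSet ∧
  (∀ e ∈ T.edgeSet, φ e ≠ a ∧ φ e ≠ b) ∧
  (∀ e ∈ T.edgeSet, ∀ f ∈ T.edgeSet, e ≠ f →
    (G.Adj (φ e) (φ f) ↔ ∃ u : U, u ∈ e ∧ u ∈ f)) ∧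
  (∀ e ∈ T.edgeSet, (G.Adj a (φ e) ↔ ∃ u : U, u ∈ e ∧ IsLeaf T u ∧ u ∈ A')) ∧
  (∀ e ∈ T.edgeSet, (G.Adj b (φ e) ↔ ∃ u : U, u ∈ e ∧ IsLeaf T u ∧ u ∈ B'))

/-- `(J, M)` is optimal for the edge `ab`: `G` contains an induced extended tree
line-graph with cross-edge `ab`; among all such, the shape `J` has as many edges
as possible; and the `J`-strip system `S` has cross-edge `ab` with partition
`(α,β)` and `V(M)` maximal. -/
def OptimalFor {G : SimpleGraph V} {J : SimpleGraph W} (S : StripSystem G J)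
    (a b : V) (α β : Set W) : Prop :=
  (∃ (n : ℕ) (T : SimpleGraph (Fin n)) (A' B' : Set (Fin n)) (φ : Sym2 (Fin n) → V),
      ExtTreeLineGraphIn G T A' B' a b φ ∧ Nonempty (J ≃g Shape T)) ∧
  (∀ (n : ℕ) (T : SimpleGraph (Fin n)) (A' B' : Set (Fin n)) (φ : Sym2 (Fin n) → V),
      ExtTreeLineGraphIn G T A' B' a b φ →
      (Shape T).edgeSet.ncard ≤ J.edgeSet.ncard) ∧
  IsCrossEdge S a b α β ∧
  (∀ (S' : StripSystem G J) (α' β' : Set W), IsCrossEdge S' a b α' β' →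
      VM S ⊆ VM S' → VM S' = VM S)

/-- There is a path from `y` to `VMset \ N[a]` containing no neighbours of `a`
except `y`. -/
def ExternalFrom (G : SimpleGraph V) (VMset : Set V) (a y : V) : Prop :=
  ∃ (z : V) (P : G.Walk y z), P.IsPath ∧ z ∈ VMset ∧ z ∉ closedNbhd G a ∧
    ∀ v ∈ P.support, G.Adj a v → v = y

/-- A major vertex: a common neighbour of `a,b` that is both `a`-external and
`b`-external. -/
def MajorVertex {G : SimpleGraph V} {J : SimpleGraph W} (S : StripSystem G J)
    (a b : V) (y : V) : Prop :=
  G.Adj a y ∧ G.Adj b y ∧ ExternalFrom G (VM S) a y ∧ ExternalFrom G (VM S) b y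

/-- The vertex set of a pyramid strip system. -/
def PSSVerts (a : V) {k : ℕ} (A B C : Fin k → Set V) : Set V :=
  insert a (⋃ i, A i ∪ B i ∪ C i)

/-- A pyramid strip system with apex `a` and proper strips `(A i, B i, C i)`. -/
def IsPyramidStripSystem (G : SimpleGraph V) (a : V) {k : ℕ}
    (A B C : Fin k → Set V) : Prop :=
  3 ≤ k ∧
  (∀ i, IsStrip G (A i) (B i) (C i)) ∧
  (∀ i, Disjoint (A i) (B i)) ∧
  (∀ i j, i ≠ j → Disjoint (A i ∪ B i ∪ C i) (A j ∪ B j ∪ C j)) ∧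
  (∀ i j, i ≠ j → ∀ p ∈ A i ∪ B i ∪ C i, ∀ q ∈ A j ∪ B j ∪ C j,
      (G.Adj p q ↔ p ∈ B i ∧ q ∈ B j)) ∧
  (∀ i, a ∉ A i ∪ B i ∪ C i) ∧
  (∀ i, ∀ p ∈ A i ∪ B i ∪ C i, (G.Adj a p ↔ p ∈ A i))

/-- `D i`: the union of the vertex sets of all components `F` of
`G \ (V(𝒮) ∪ N[a])` having a neighbour in `A i ∪ C i`. -/
def PSSD (G : SimpleGraph V) (a : V) {k : ℕ} (A B C : Fin k → Set V)
    (i : Fin k) : Set V :=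
  ⋃₀ {F : Set V | IsComponentOf G (PSSVerts a A B C ∪ closedNbhd G a) F ∧
      ∃ v ∈ A i ∪ C i, ∃ x ∈ F, G.Adj v x}

def TypeAlpha (G : SimpleGraph V) {k : ℕ} (A B C : Fin k → Set V) (v : V) : Prop :=
  ∀ i : Fin k, (∃ p ∈ B i ∪ C i, G.Adj v p) ∨ ∀ p ∈ A i, G.Adj v p

def TypeAlpha' (G : SimpleGraph V) (a : V) {k : ℕ} (A B C : Fin k → Set V)
    (v : V) : Prop :=
  ∃ i : Fin k, (∃ x ∈ PSSD G a A B C i, G.Adj v x) ∧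
    (∀ p ∈ B i ∪ C i, ¬ G.Adj v p) ∧
    ∀ j : Fin k, j ≠ i →
      (∀ p ∈ A j, G.Adj v p) ∧ ∀ p ∈ B j ∪ C j ∪ PSSD G a A B C j, ¬ G.Adj v p

def TypeBeta (G : SimpleGraph V) {k : ℕ} (A B C : Fin k → Set V) (v : V) : Prop :=
  ∃ i : Fin k, (∀ p ∈ A i ∪ B i ∪ C i, ¬ G.Adj v p) ∧
    ∀ j : Fin k, j ≠ i → ∃ p ∈ B j ∪ C j, G.Adj v p

def TypeGamma (G : SimpleGraph V) (a : V) {k : ℕ} (A B C : Fin k → Set V)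
    (v : V) : Prop :=
  ∃ (i : Fin k) (q : V) (Q : G.Walk v q), Q.IsPath ∧ InducedWalk G Q ∧
    (∀ w ∈ Q.support, w ≠ v → w ∉ PSSVerts a A B C ∪ closedNbhd G a) ∧
    (∃ p ∈ ⋃ j, B j, G.Adj q p) ∧
    ((∀ p ∈ (⋃ j, B j) \ B i, G.Adj q p) ∨ ∀ p ∈ (⋃ j, B j) \ B i, ¬ G.Adj q p) ∧
    (∀ j : Fin k, j ≠ i → ∀ p ∈ A j, G.Adj v p) ∧
    (∀ j : Fin k, ∀ p ∈ B j ∪ C j ∪ PSSD G a A B C j, ¬ G.Adj v p) ∧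
    ∀ w ∈ Q.support, w ≠ v → ∀ p ∈ PSSVerts a A B C, G.Adj w p →
      w = q ∧ p ∈ ⋃ j, B j

/-- A backdoor for `z`, relative to the strip `(A,B,C)` and the set `D`. -/
def Backdoor (G : SimpleGraph V) (A B C D : Set V) (z : V) : Prop :=
  ∃ (b' : V) (R : G.Walk z b'), R.IsPath ∧ InducedWalk G R ∧
    (∀ w ∈ R.support, w ≠ z → w ≠ b' → ∀ p ∈ (A ∪ B ∪ C) ∪ D, ¬ G.Adj w p) ∧
    (∀ p ∈ B, G.Adj b' p) ∧ ∀ p ∈ A ∪ C ∪ D, ¬ G.Adj b' p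


section Aux

variable {V : Type*} {W : Type*} {G : SimpleGraph V} {J : SimpleGraph W}

lemma edge_unique (S : StripSystem G J) {x : V} {u v p q : W}
    (huv : J.Adj u v) (hpq : J.Adj p q) (h1 : x ∈ S.ME u v) (h2 : x ∈ S.ME p q) :
    s(u, v) = s(p, q) := by
  by_contra h
  exact Set.disjoint_left.mp (S.me_disj u v p q huv hpq h) h1 h2

lemma mv_mem (S : StripSystem G J) {x : V} {t : W} (hx : x ∈ S.MV t) :
    ∃ w, J.Adj t w ∧ x ∈ S.ME t w := by
  have := S.mv_sub t hx
  simpa [Set.mem_iUnion] using this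

lemma mv_endpoint (S : StripSystem G J) {x : V} {t u v : W}
    (hx : x ∈ S.MV t) (hxe : x ∈ S.ME u v) (huv : J.Adj u v) : t = u ∨ t = v := by
  obtain ⟨w, hw, hxw⟩ := mv_mem S hx
  have h := edge_unique S hw huv hxw hxe
  rw [Sym2.eq_iff] at h
  tauto

lemma me_transfer (S : StripSystem G J) {x : V} {u v p q : W}
    (h : s(u, v) = s(p, q)) (hx : x ∈ S.ME u v) : x ∈ S.ME p q := by
  rw [Sym2.eq_iff] at h
  rcases h with ⟨rfl, rfl⟩ | ⟨rfl, rfl⟩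
  · exact hx
  · rwa [S.me_symm]

lemma no_triangle (hJ : J.IsTree) {u v w : W}
    (h1 : J.Adj u v) (h2 : J.Adj v w) (h3 : J.Adj u w) : False := by
  have hp := SimpleGraph.isAcyclic_iff_path_unique.mp hJ.IsAcyclic
  have h := hp (SimpleGraph.Path.singleton h3)
    ⟨SimpleGraph.Walk.cons h1 (SimpleGraph.Walk.cons h2 SimpleGraph.Walk.nil),
      by simp [SimpleGraph.Walk.isPath_def, h1.ne, h2.ne, h3.ne]⟩
  have hlen := congrArg (fun p : J.Path u w => p.1.length) h
  simp [SimpleGraph.Path.singleton] at hlen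

lemma leaf_nbhd {u u' : W} (hu : IsLeaf J u) (h : J.Adj u u') :
    J.neighborSet u = {u'} := by
  obtain ⟨t, ht⟩ := Set.ncard_eq_one.mp hu
  have hm : u' ∈ J.neighborSet u := h
  rw [ht] at hm ⊢
  rw [Set.mem_singleton_iff] at hm
  rw [hm]

lemma stay {u u' : W} (hu : J.neighborSet u = {u'}) (hu' : J.neighborSet u' = {u}) :
    ∀ {x z : W} (p : J.Walk x z), (x = u ∨ x = u') → (z = u ∨ z = u') := by
  intro x z p
  induction p with
  | nil => exact id
  | @cons x' b z' h q ih =>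
    intro hx
    apply ih
    rcases hx with rfl | rfl
    · right
      have hb : b ∈ J.neighborSet x' := h
      rw [hu] at hb
      exact hb
    · left
      have hb : b ∈ J.neighborSet x' := h
      rw [hu'] at hb
      exact hb

lemma no_adj_leaves (hJ : J.IsTree) (hcard : 3 ≤ Nat.card W) {u u' : W}
    (hu : IsLeaf J u) (hu' : IsLeaf J u') (h : J.Adj u u') : False := by
  have hns : J.neighborSet u = {u'} := leaf_nbhd hu h
  have hns' : J.neighborSet u' = {u} := leaf_nbhd hu' h.symm
  have hfin : Finite W := Nat.finite_of_card_ne_zero (by omega)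
  obtain ⟨w, hw1, hw2⟩ : ∃ w : W, w ≠ u ∧ w ≠ u' := by
    by_contra hc
    push_neg at hc
    have huniv : (Set.univ : Set W) ⊆ {u, u'} := by
      intro w _
      rcases eq_or_ne w u with rfl | hwu
      · exact Set.mem_insert _ _
      · exact Set.mem_insert_of_mem _ (Set.mem_singleton_iff.mpr (hc w hwu))
    have h1 := Set.ncard_le_ncard huniv (Set.toFinite _)
    rw [Set.ncard_univ] at h1
    have h2 : ({u, u'} : Set W).ncard ≤ 2 :=
      le_trans (Set.ncard_insert_le _ _) (by simp)
    omega
  obtain ⟨p⟩ := hJ.isConnected.preconnected u w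
  rcases stay hns hns' p (Or.inl rfl) with h' | h'
  · exact hw1 h'
  · exact hw2 h' 

lemma crossEdge_swap {S : StripSystem G J} {a b : V} {α β : Set W}
    (h : IsCrossEdge S a b α β) : IsCrossEdge S b a β α := by
  obtain ⟨h1, h2, h3, h4, h5, h6, h7, h8, h9, h10⟩ := h
  exact ⟨h1.symm, by rw [Set.union_comm]; exact h2, h3.symm, h4, h5, h7, h6,
    fun u v huv => ⟨(h8 u v huv).2, (h8 u v huv).1⟩, h10, h9⟩

lemma isLocal_swap (S : StripSystem G J) (a b : V) (α β : Set W) (X : Set V) :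
    IsLocal S a b α β X ↔ IsLocal S b a β α X := by
  unfold IsLocal
  constructor <;>
    · rintro (h | h | ⟨h1, h2, h3⟩ | ⟨h1, h2, h3⟩)
      · exact Or.inl h
      · exact Or.inr (Or.inl h)
      · exact Or.inr (Or.inr (Or.inr ⟨h1, h2, h3⟩))
      · exact Or.inr (Or.inr (Or.inl ⟨h1, h2, h3⟩))

lemma key (hJ : J.IsTree) (S : StripSystem G J) {a b : V} {α β : Set W}
    (hcross : IsCrossEdge S a b α β) (X : Set V)
    (hXsub : X ⊆ VM S ∪ {a, b}) (hbX : b ∉ X)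
    (hpairs : ∀ x ∈ X, ∀ y ∈ X, IsLocal S a b α β {x, y}) :
    IsLocal S a b α β X := by
  obtain ⟨hadj, hleaves, hdαβ, hn2, hcard, hαu, hβu, hnot, haN, hbN⟩ := hcross
  have habne : a ≠ b := hadj.ne
  have hanotMV : ∀ u, a ∉ S.MV u := by
    intro u hu
    obtain ⟨w, hw, hmem⟩ := mv_mem S hu
    exact (hnot u w hw).1 hmem
  have hxb : ∀ x ∈ X, x ≠ b := fun x hx => ne_of_mem_of_not_mem hx hbX
  have hedge : ∀ x ∈ X, x ≠ a → ∃ u v, J.Adj u v ∧ x ∈ S.ME u v := by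
    intro x hx hxa
    rcases hXsub hx with h | h
    · simpa [VM, Set.mem_iUnion] using h
    · rcases h with h | h
      · exact absurd h hxa
      · exact absurd h (hxb x hx)
  have hOneTwo : ∀ x ∈ X, x ≠ a → ∀ y ∈ X, y ≠ a →
      (∃ u v, J.Adj u v ∧ x ∈ S.ME u v ∧ y ∈ S.ME u v) ∨
      (∃ t, x ∈ S.MV t ∧ y ∈ S.MV t) := by
    intro x hx hxa y hy hya
    rcases hpairs x hx y hy with ⟨u, v, huv, hsub⟩ | ⟨t, hsub⟩ |
      ⟨ha', _, _⟩ | ⟨hb', _, _⟩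
    · exact Or.inl ⟨u, v, huv, hsub (by simp), hsub (by simp)⟩
    · exact Or.inr ⟨t, hsub (by simp), hsub (by simp)⟩
    · simp only [Set.mem_insert_iff, Set.mem_singleton_iff] at ha'
      rcases ha' with h | h
      · exact absurd h.symm hxa
      · exact absurd h.symm hya
    · simp only [Set.mem_insert_iff, Set.mem_singleton_iff] at hb'
      rcases hb' with h | h
      · exact absurd h.symm (hxb x hx)
      · exact absurd h.symm (hxb y hy)
  by_cases haX : a ∈ X
  · -- a ∈ X: every other vertex of X lies in MV u for some u ∈ α
    have hxu : ∀ x ∈ X, x ≠ a → ∃ u ∈ α, x ∈ S.MV u := by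
      intro x hx hxa
      rcases hpairs a haX x hx with ⟨u, v, huv, hsub⟩ | ⟨t, hsub⟩ |
        ⟨_, _, u, hu, hsub⟩ | ⟨hb', _, _⟩
      · exact absurd (hsub (by simp)) ((hnot u v huv).1)
      · exact absurd (hsub (by simp)) (hanotMV t)
      · refine ⟨u, hu, hsub ⟨by simp, ?_⟩⟩
        simpa using hxa.symm ∘ Eq.symm
      · simp only [Set.mem_insert_iff, Set.mem_singleton_iff] at hb'
        rcases hb' with rfl | rfl
        · exact absurd rfl habne.symm
        · exact absurd hx hbX
    by_cases hXa : ∀ x ∈ X, x = a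
    · -- X ⊆ {a}; get α nonempty from locality of {a}
      rcases hpairs a haX a haX with ⟨u, v, huv, hsub⟩ | ⟨t, hsub⟩ |
        ⟨_, _, u, hu, _⟩ | ⟨hb', _, _⟩
      · exact absurd (hsub (by simp)) ((hnot u v huv).1)
      · exact absurd (hsub (by simp)) (hanotMV t)
      · refine Or.inr (Or.inr (Or.inl ⟨haX, hbX, u, hu, ?_⟩))
        rintro z ⟨hz, hza⟩
        exact absurd (hXa z hz) (by simpa using hza)
      · simp only [Set.mem_insert_iff, Set.mem_singleton_iff] at hb'
        rcases hb' with rfl | rfl <;> exact absurd rfl habne.symm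
    · push_neg at hXa
      obtain ⟨x0, hx0, hx0a⟩ := hXa
      obtain ⟨u0, hu0α, hx0u0⟩ := hxu x0 hx0 hx0a
      refine Or.inr (Or.inr (Or.inl ⟨haX, hbX, u0, hu0α, ?_⟩))
      rintro x ⟨hx, hxa'⟩
      have hxa : x ≠ a := by simpa using hxa'
      obtain ⟨u1, hu1α, hxu1⟩ := hxu x hx hxa
      by_cases h01 : u1 = u0
      · exact h01 ▸ hxu1
      have hu0l : IsLeaf J u0 := by
        have h' := Set.mem_union_left β hu0α
        rw [hleaves] at h'
        exact h'
      have hu1l : IsLeaf J u1 := by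
        have h' := Set.mem_union_left β hu1α
        rw [hleaves] at h'
        exact h'
      obtain ⟨w0, hw0, hx0e⟩ := mv_mem S hx0u0
      obtain ⟨w1, hw1, hxe⟩ := mv_mem S hxu1
      rcases hOneTwo x0 hx0 hx0a x hx hxa with ⟨p, q, hpq, hx0pq, hxpq⟩ |
        ⟨t, hx0t, hxt⟩
      · have e1 := edge_unique S hw0 hpq hx0e hx0pq
        have e2 := edge_unique S hw1 hpq hxe hxpq
        have h' := e1.trans e2.symm
        rw [Sym2.eq_iff] at h'
        rcases h' with ⟨h'', _⟩ | ⟨rfl, rfl⟩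
        · exact absurd h''.symm h01
        · exact absurd (no_adj_leaves hJ hcard hu1l hu0l hw1) id
      · rcases mv_endpoint S hx0t hx0e hw0 with h0 | h0
        · rw [h0] at hxt
          exact hxt
        · rcases mv_endpoint S hxt hxe hw1 with h1 | h1
          · have hww : w0 = u1 := h0.symm.trans h1
            rw [hww] at hw0
            exact (no_adj_leaves hJ hcard hu0l hu1l hw0).elim
          · have hww : w0 = w1 := h0.symm.trans h1
            rw [hww] at hw0
            exact absurd (hαu w1 u0 u1 hu0α hu1α hw0.symm hw1.symm).symm h01
  · -- a ∉ X
    have hxa : ∀ x ∈ X, x ≠ a := fun x hx => ne_of_mem_of_not_mem hx haX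
    by_cases hdiff : ∃ x ∈ X, ∃ y ∈ X, ∃ u v p q, J.Adj u v ∧ J.Adj p q ∧
        x ∈ S.ME u v ∧ y ∈ S.ME p q ∧ s(u, v) ≠ s(p, q)
    · obtain ⟨x0, hx0, y0, hy0, u, v, p, q, huv, hpq, hx0e0, hy0e0, hnee⟩ := hdiff
      rcases hOneTwo x0 hx0 (hxa _ hx0) y0 hy0 (hxa _ hy0) with
        ⟨r, s, hrs, h1, h2⟩ | ⟨t, hx0t, hy0t⟩
      · exact absurd ((edge_unique S huv hrs hx0e0 h1).trans
          (edge_unique S hpq hrs hy0e0 h2).symm) hnee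
      obtain ⟨v0, htv0, hx0e⟩ : ∃ v0, J.Adj t v0 ∧ x0 ∈ S.ME t v0 := by
        rcases mv_endpoint S hx0t hx0e0 huv with rfl | rfl
        · exact ⟨v, huv, hx0e0⟩
        · exact ⟨u, huv.symm, by rwa [S.me_symm]⟩
      obtain ⟨v1, htv1, hy0e⟩ : ∃ v1, J.Adj t v1 ∧ y0 ∈ S.ME t v1 := by
        rcases mv_endpoint S hy0t hy0e0 hpq with rfl | rfl
        · exact ⟨q, hpq, hy0e0⟩
        · exact ⟨p, hpq.symm, by rwa [S.me_symm]⟩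
      have hv01 : v0 ≠ v1 := by
        rintro rfl
        exact hnee ((edge_unique S huv htv0 hx0e0 hx0e).trans
          (edge_unique S htv0 hpq hy0e hy0e0))
      refine Or.inr (Or.inl ⟨t, ?_⟩)
      intro z hz
      rcases hOneTwo z hz (hxa _ hz) x0 hx0 (hxa _ hx0) with
        ⟨r, s, hrs, hze, hx0e2⟩ | ⟨t1, hzt1, hx0t1⟩
      · -- z shares x0's edge s(t,v0)
        have hze' : z ∈ S.ME t v0 :=
          me_transfer S (edge_unique S hrs htv0 hx0e2 hx0e) hze
        rcases hOneTwo z hz (hxa _ hz) y0 hy0 (hxa _ hy0) with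
          ⟨r', s', hrs', hze2, hy0e2⟩ | ⟨t2, hzt2, hy0t2⟩
        · have h' := (edge_unique S hrs' htv0 hze2 hze').symm.trans
            (edge_unique S hrs' htv1 hy0e2 hy0e)
          rw [Sym2.eq_iff] at h'
          rcases h' with ⟨_, h''⟩ | ⟨h'', _⟩
          · exact absurd h'' hv01
          · exact absurd h'' htv1.ne
        · rcases mv_endpoint S hzt2 hze' htv0 with h' | h'
          · rw [h'] at hzt2
            exact hzt2
          · rcases mv_endpoint S hy0t2 hy0e htv1 with h'' | h''
            · rw [h''] at hzt2
              exact hzt2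
            · exact absurd (h'.symm.trans h'') hv01
      · rcases mv_endpoint S hx0t1 hx0e htv0 with h0 | h0
        · rw [h0] at hzt1
          exact hzt1
        · -- t1 = v0, z ∈ MV v0
          rcases hOneTwo z hz (hxa _ hz) y0 hy0 (hxa _ hy0) with
            ⟨r', s', hrs', hze2, hy0e2⟩ | ⟨t2, hzt2, hy0t2⟩
          · have hze' : z ∈ S.ME t v1 :=
              me_transfer S (edge_unique S hrs' htv1 hy0e2 hy0e) hze2
            rcases mv_endpoint S hzt1 hze' htv1 with h' | h'
            · exact absurd (h0.symm.trans h') htv0.ne'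
            · exact absurd (h0.symm.trans h') hv01
          · rcases mv_endpoint S hy0t2 hy0e htv1 with h1 | h1
            · rw [h1] at hzt2
              exact hzt2
            · -- z ∈ MV v0 ∩ MV v1, so z's edge is v0v1: triangle
              obtain ⟨r, s, hrs, hze⟩ := hedge z hz (hxa _ hz)
              have e0 := mv_endpoint S hzt1 hze hrs
              have e1 := mv_endpoint S hzt2 hze hrs
              rw [h0] at e0
              rw [h1] at e1
              have hadj01 : J.Adj v0 v1 := by
                rcases e0 with h | h <;> rcases e1 with h' | h'
                · exact absurd (h.trans h'.symm) hv01
                · rw [h, h']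
                  exact hrs
                · rw [h, h']
                  exact hrs.symm
                · exact absurd (h.trans h'.symm) hv01
              exact (no_triangle hJ htv0.symm htv1 hadj01).elim
    · push_neg at hdiff
      rcases Set.eq_empty_or_nonempty X with rfl | ⟨x0, hx0⟩
      · have hW : Nonempty W := by
          have : 0 < Nat.card W := by omega
          exact (Nat.card_pos_iff.mp this).1
        obtain ⟨u⟩ := hW
        exact Or.inr (Or.inl ⟨u, Set.empty_subset _⟩)
      · obtain ⟨u, v, huv, hx0e⟩ := hedge x0 hx0 (hxa _ hx0)
        refine Or.inl ⟨u, v, huv, ?_⟩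
        intro z hz
        obtain ⟨p, q, hpq, hze⟩ := hedge z hz (hxa _ hz)
        exact me_transfer S (hdiff z hz x0 hx0 p q u v hpq huv hze hx0e) hze

end Aux

theorem statement_5 {V W : Type*} [Fintype V] [Fintype W] (G : SimpleGraph V)
    (J : SimpleGraph W) (hJ : J.IsTree) (S : StripSystem G J)
    (a b : V) (α β : Set W) (hcross : IsCrossEdge S a b α β)
    (X : Set V) (hXsub : X ⊆ VM S ∪ {a, b})
    (hXnl : ¬ IsLocal S a b α β X) (hab : ¬ ({a, b} : Set V) ⊆ X) :
    ∃ x ∈ X, ∃ y ∈ X, ¬ IsLocal S a b α β {x, y} := by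
  by_contra hcon
  push_neg at hcon
  have hone : b ∉ X ∨ a ∉ X := by
    by_contra h
    push_neg at h
    exact hab (Set.insert_subset h.2 (Set.singleton_subset_iff.mpr h.1))
  rcases hone with hb | ha
  · exact hXnl (key hJ S hcross X hXsub hb hcon)
  · have hXsub' : X ⊆ VM S ∪ {b, a} := by rwa [Set.pair_comm b a]
    have hcon' : ∀ x ∈ X, ∀ y ∈ X, IsLocal S b a β α {x, y} := fun x hx y hy =>
      (isLocal_swap S a b α β _).mp (hcon x hx y hy)
    exact hXnl ((isLocal_swap S a b α β X).mpr
      (key hJ S (crossEdge_swap hcross) X hXsub' ha hcon'))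


end EHF
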